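/- For every integer n ≥ 2 and every integer k ≥ ⌈n/2⌉ + 1, the number of non-equivalent distinguishing colorings of the path P_n using exactly k colors equals k!·S(n,k)/2, i.e., φ_k(P_n) = k!·S(n,k)/2. -/

import Mathlib

open SimpleGraph

def IsDistinguishing {V : Type*} {k : ℕ} (G : SimpleGraph V) (c : V → Fin k) : Prop :=
  ∀ α : G ≃g G, (∀ v, c (α v) = c v) → ∀ v, α v = v

noncomputable def Phi {V : Type*} (G : SimpleGraph V) (k : ℕ) : ℕ :=
  Nat.card (Quot (fun c₁ c₂ : {c : V → Fin k // IsDistinguishing G c} =>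
    ∃ α : G ≃g G, ∀ v, c₁.1 v = c₂.1 (α v)))

noncomputable def phi {V : Type*} (G : SimpleGraph V) (k : ℕ) : ℕ :=
  Nat.card (Quot (fun c₁ c₂ : {c : V → Fin k // IsDistinguishing G c ∧ Function.Surjective c} =>
    ∃ α : G ≃g G, ∀ v, c₁.1 v = c₂.1 (α v)))

noncomputable def theta {V : Type*} (G : SimpleGraph V) : ℕ :=
  sInf {t | ∀ k, t ≤ k → ∀ c : V → Fin k, Function.Surjective c → IsDistinguishing G c}

def stirling2 : ℕ → ℕ → ℕ
  | 0, 0 => 1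
  | 0, _ + 1 => 0
  | _ + 1, 0 => 0
  | n + 1, k + 1 => (k + 1) * stirling2 n (k + 1) + stirling2 n k

def IsDCPartition {V : Type*} [DecidableEq V] [Fintype V] (G : SimpleGraph V)
    (P : Finpartition (Finset.univ : Finset V)) : Prop :=
  ∀ α : G ≃g G, (∀ p ∈ P.parts, p.image ⇑α = p) → ∀ v, α v = v

def IsDPartition {V : Type*} [DecidableEq V] [Fintype V] (G : SimpleGraph V)
    (P : Finpartition (Finset.univ : Finset V)) : Prop :=
  ∀ α : G ≃g G, P.parts.image (fun p => p.image ⇑α) = P.parts → ∀ v, α v = v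

def PartEquiv {V : Type*} [DecidableEq V] [Fintype V] (G : SimpleGraph V)
    (P₁ P₂ : Finpartition (Finset.univ : Finset V)) : Prop :=
  ∃ α : G ≃g G, P₁.parts.image (fun p => p.image ⇑α) = P₂.parts

noncomputable def psi {V : Type*} [DecidableEq V] [Fintype V] (G : SimpleGraph V) (k : ℕ) : ℕ :=
  Nat.card (Quot (fun P₁ P₂ : {P : Finpartition (Finset.univ : Finset V) //
      IsDCPartition G P ∧ P.parts.card = k} => PartEquiv G P₁.1 P₂.1))

noncomputable def PsiAtMost {V : Type*} [DecidableEq V] [Fintype V] (G : SimpleGraph V) (k : ℕ) : ℕ :=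
  Nat.card (Quot (fun P₁ P₂ : {P : Finpartition (Finset.univ : Finset V) //
      IsDCPartition G P ∧ P.parts.card ≤ k} => PartEquiv G P₁.1 P₂.1))

noncomputable def PiAtMost {V : Type*} [DecidableEq V] [Fintype V] (G : SimpleGraph V) (k : ℕ) : ℕ :=
  Nat.card (Quot (fun P₁ P₂ : {P : Finpartition (Finset.univ : Finset V) //
      P.parts.card ≤ k} => PartEquiv G P₁.1 P₂.1))

noncomputable def XiAtMost {V : Type*} [DecidableEq V] [Fintype V] (G : SimpleGraph V) (k : ℕ) : ℕ :=
  Nat.card (Quot (fun P₁ P₂ : {P : Finpartition (Finset.univ : Finset V) //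
      IsDPartition G P ∧ P.parts.card ≤ k} => PartEquiv G P₁.1 P₂.1))

def kneserGraph2 (n : ℕ) : SimpleGraph {s : Finset (Fin n) // s.card = 2} where
  Adj a b := Disjoint a.1 b.1
  symm := ⟨fun a b h => h.symm⟩
  loopless := by
    refine ⟨?_⟩
    rintro ⟨s, hs⟩ h
    simp only [disjoint_self, Finset.bot_eq_empty] at h
    simp [h] at hs

def lexProd {V W : Type*} (X : SimpleGraph V) (Y : SimpleGraph W) : SimpleGraph (V × W) where
  Adj a b := X.Adj a.1 b.1 ∨ (a.1 = b.1 ∧ Y.Adj a.2 b.2)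
  symm := by
    refine ⟨?_⟩
    rintro ⟨x, y⟩ ⟨x', y'⟩ (h | ⟨h, h'⟩)
    · exact Or.inl h.symm
    · exact Or.inr ⟨h.symm, h'.symm⟩
  loopless := by
    refine ⟨?_⟩
    rintro ⟨x, y⟩ (h | ⟨-, h⟩)
    · exact X.loopless.irrefl x h
    · exact Y.loopless.irrefl y h

def IsNaturalAut {V W : Type*} (X : SimpleGraph V) (Y : SimpleGraph W)
    (μ : lexProd X Y ≃g lexProd X Y) : Prop :=
  ∀ x : V, ∃ x' : V, (fun p => μ p) '' ({x} ×ˢ (Set.univ : Set W)) = {x'} ×ˢ (Set.univ : Set W)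

noncomputable def distNumber {V : Type*} (G : SimpleGraph V) : ℕ :=
  sInf {k | ∃ c : V → Fin k, IsDistinguishing G c}

def revIso (n : ℕ) : pathGraph n ≃g pathGraph n where
  toEquiv := (Fin.revPerm : Equiv.Perm (Fin n))
  map_rel_iff' := by
    intro u v
    simp only [Equiv.coe_fn_mk, pathGraph_adj, Fin.revPerm_apply, Fin.val_rev]
    have := u.isLt; have := v.isLt
    omega

lemma aut_eq_id_of_zero (n : ℕ) (α : pathGraph n ≃g pathGraph n) (h0 : 0 < n)
    (hz : (α ⟨0, h0⟩).val = 0) : ∀ v, α v = v := by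
  have key : ∀ m : ℕ, ∀ hm : m < n, α ⟨m, hm⟩ = ⟨m, hm⟩ := by
    intro m
    induction m using Nat.strong_induction_on with
    | _ m ih =>
      match m with
      | 0 => intro hm; exact Fin.ext hz
      | p + 1 =>
        intro hm
        have hp : p < n := by omega
        have hadj : (pathGraph n).Adj (⟨p, hp⟩ : Fin n) ⟨p + 1, hm⟩ := by
          rw [pathGraph_adj]; left; rfl
        have hA : (pathGraph n).Adj (α ⟨p, hp⟩) (α ⟨p+1, hm⟩) := α.map_rel_iff.2 hadj
        rw [ih p (by omega) hp] at hA
        rw [pathGraph_adj] at hA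
        simp only [Fin.val_mk] at hA
        rcases hA with h | h
        · exact Fin.ext h.symm
        · exfalso
          have hq : p - 1 < n := by omega
          have h1 : α ⟨p+1, hm⟩ = ⟨p - 1, hq⟩ := by
            apply Fin.ext; simp only [Fin.val_mk]; omega
          have h2 : α ⟨p-1, hq⟩ = ⟨p-1, hq⟩ := ih (p-1) (by omega) hq
          have h3 := α.injective (h1.trans h2.symm)
          have h4 : p + 1 = p - 1 := congrArg Fin.val h3
          omega
  intro v
  have := key v.val v.isLt
  simpa using this

lemma revIso_apply (n : ℕ) (v : Fin n) : revIso n v = Fin.rev v := rfl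

lemma adj_zero {n : ℕ} (h0 : 0 < n) {x : Fin n} (h : (pathGraph n).Adj x ⟨0, h0⟩) :
    x.val = 1 := by
  rw [pathGraph_adj] at h; simp only [Fin.val_mk] at h; omega

lemma aut_zero (n : ℕ) (hn : 2 ≤ n) (α : pathGraph n ≃g pathGraph n) :
    (α ⟨0, by omega⟩).val = 0 ∨ (α ⟨0, by omega⟩).val = n - 1 := by
  by_contra hcon
  push_neg at hcon
  obtain ⟨h1, h2⟩ := hcon
  set j := (α ⟨0, by omega⟩).val with hj
  have hjlt : j < n := (α _).isLt
  have hfj : α ⟨0, by omega⟩ = ⟨j, hjlt⟩ := Fin.ext rfl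
  clear_value j
  have hq1 : j - 1 < n := by omega
  have hq2 : j + 1 < n := by omega
  have ha : (pathGraph n).Adj ⟨j-1, hq1⟩ (α ⟨0, by omega⟩) := by
    rw [hfj, pathGraph_adj]; simp only [Fin.val_mk]; omega
  have hb : (pathGraph n).Adj ⟨j+1, hq2⟩ (α ⟨0, by omega⟩) := by
    rw [hfj, pathGraph_adj]; simp only [Fin.val_mk]
    exact Or.inr trivial
  have ha' : (pathGraph n).Adj (α.symm ⟨j-1, hq1⟩) ⟨0, by omega⟩ := by
    have := α.map_rel_iff (a := α.symm ⟨j-1, hq1⟩) (b := ⟨0, by omega⟩)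
    rw [← this]; simpa using ha
  have hb' : (pathGraph n).Adj (α.symm ⟨j+1, hq2⟩) ⟨0, by omega⟩ := by
    have := α.map_rel_iff (a := α.symm ⟨j+1, hq2⟩) (b := ⟨0, by omega⟩)
    rw [← this]; simpa using hb
  have e1 := adj_zero (by omega) ha'
  have e2 := adj_zero (by omega) hb'
  have : α.symm ⟨j-1, hq1⟩ = α.symm ⟨j+1, hq2⟩ := Fin.ext (e1.trans e2.symm)
  have := α.symm.injective this
  have := congrArg Fin.val this
  simp only [Fin.val_mk] at this
  omega

lemma aut_char (n : ℕ) (hn : 2 ≤ n) (α : pathGraph n ≃g pathGraph n) :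
    (∀ v, α v = v) ∨ (∀ v, α v = Fin.rev v) := by
  rcases aut_zero n hn α with h | h
  · exact Or.inl (aut_eq_id_of_zero n α (by omega) h)
  · right
    set β : pathGraph n ≃g pathGraph n := α.trans (revIso n) with hβ
    have hb0 : (β ⟨0, by omega⟩).val = 0 := by
      show ((revIso n) (α ⟨0, by omega⟩)).val = 0
      rw [revIso_apply, Fin.val_rev]
      omega
    have hid := aut_eq_id_of_zero n β (by omega) hb0
    intro v
    have := hid v
    have : Fin.rev (α v) = v := by
      rw [← revIso_apply]; exact this
    have := congrArg Fin.rev this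
    rwa [Fin.rev_rev] at this

def surjEquiv {α β γ : Type*} (e : β ≃ γ) :
    {f : α → β // Function.Surjective f} ≃ {f : α → γ // Function.Surjective f} where
  toFun f := ⟨e ∘ f.1, e.surjective.comp f.2⟩
  invFun g := ⟨e.symm ∘ g.1, e.symm.surjective.comp g.2⟩
  left_inv f := by ext x; simp
  right_inv g := by ext x; simp

def rangeComplEquiv {α β : Type*} (v : β) :
    {f : α → β // Set.range f = {v}ᶜ} ≃ {g : α → {x : β // x ≠ v} // Function.Surjective g} where
  toFun f := ⟨fun i => ⟨f.1 i, by
      have : f.1 i ∈ Set.range f.1 := Set.mem_range_self i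
      rw [f.2] at this; exact this⟩, by
    rintro ⟨x, hx⟩
    have : x ∈ Set.range f.1 := by rw [f.2]; exact hx
    obtain ⟨i, hi⟩ := this
    exact ⟨i, Subtype.ext hi⟩⟩
  invFun g := ⟨fun i => (g.1 i).1, by
    ext x
    simp only [Set.mem_range, Set.mem_compl_iff, Set.mem_singleton_iff]
    constructor
    · rintro ⟨i, rfl⟩; exact (g.1 i).2
    · intro hx
      obtain ⟨i, hi⟩ := g.2 ⟨x, hx⟩
      exact ⟨i, by rw [hi]⟩⟩
  left_inv f := by ext i; rfl
  right_inv g := by ext i; rfl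

lemma surj_cons_iff {n k : ℕ} (v : Fin k) (c : Fin n → Fin k) :
    Function.Surjective (Fin.cons v c : Fin (n+1) → Fin k) ↔
      (Function.Surjective c ∨ Set.range c = {v}ᶜ) := by
  rw [← Set.range_eq_univ, ← Set.range_eq_univ (f := c), Fin.range_cons]
  constructor
  · intro h
    by_cases hv : v ∈ Set.range c
    · left; rwa [Set.insert_eq_of_mem hv] at h
    · right
      ext x
      simp only [Set.mem_compl_iff, Set.mem_singleton_iff]
      constructor
      · rintro hx rfl; exact hv hx
      · intro hx
        have : x ∈ insert v (Set.range c) := h ▸ Set.mem_univ x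
        rcases this with h' | h'
        · exact absurd h' hx
        · exact h'
  · rintro (h | h)
    · rw [h]; exact Set.insert_eq_of_mem (Set.mem_univ v) ▸ by simp
    · rw [h]; ext x; by_cases hx : x = v <;> simp [hx]

lemma card_surj : ∀ (n k : ℕ),
    Nat.card {c : Fin n → Fin k // Function.Surjective c} = k.factorial * stirling2 n k := by
  intro n
  induction n with
  | zero =>
    intro k
    match k with
    | 0 =>
      haveI : Unique {c : Fin 0 → Fin 0 // Function.Surjective c} :=
        ⟨⟨⟨finZeroElim, fun b => b.elim0⟩⟩, by
          intro a; apply Subtype.ext; funext i; exact i.elim0⟩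
      simp [Nat.card_unique, stirling2]
    | j + 1 =>
      haveI : IsEmpty {c : Fin 0 → Fin (j+1) // Function.Surjective c} := ⟨by
        rintro ⟨c, hc⟩
        obtain ⟨i, -⟩ := hc 0
        exact i.elim0⟩
      simp [stirling2]
  | succ n ih =>
    intro k
    match k with
    | 0 =>
      haveI : IsEmpty {c : Fin (n+1) → Fin 0 // Function.Surjective c} := ⟨fun c => (c.1 0).elim0⟩
      simp [stirling2]
    | j + 1 =>
      classical
      set k := j + 1 with hk
      have hdisj : ∀ v : Fin k, Disjoint (fun c : Fin n → Fin k => Function.Surjective c)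
          (fun c => Set.range c = {v}ᶜ) := by
        intro v
        intro r hr1 hr2 c hc
        have h1 : Function.Surjective c := hr1 c hc
        have h2 : Set.range c = {v}ᶜ := hr2 c hc
        exfalso
        have : v ∈ Set.range c := h1.range_eq ▸ Set.mem_univ v
        rw [h2] at this
        exact this rfl
      have hcard : ∀ v : Fin k, Fintype.card {x : Fin k // x ≠ v} = j := by
        intro v
        rw [Fintype.card_subtype_compl]
        simp
        omega
      let E : {c : Fin (n+1) → Fin k // Function.Surjective c} ≃
          (Fin k × ({c : Fin n → Fin k // Function.Surjective c} ⊕ {d : Fin n → Fin j // Function.Surjective d})) :=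
        (((Fin.consEquiv (fun _ : Fin (n+1) => Fin k)).subtypeEquiv (fun p => by
            exact (surj_cons_iff p.1 p.2).symm)).symm.trans
          (Equiv.subtypeProdEquivSigmaSubtype
            (fun v (c : Fin n → Fin k) => Function.Surjective c ∨ Set.range c = {v}ᶜ))).trans
        ((Equiv.sigmaCongrRight (fun v =>
            (subtypeOrEquiv _ _ (hdisj v)).trans
              (Equiv.sumCongr (Equiv.refl _)
                ((rangeComplEquiv v).trans
                  (surjEquiv (Fintype.equivFinOfCardEq (hcard v))))))).trans
          (Equiv.sigmaEquivProd _ _))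
      rw [Nat.card_congr E, Nat.card_prod, Nat.card_sum, ih k, ih j]
      have hfin : Nat.card (Fin k) = k := Nat.card_eq_of_equiv_fin (Equiv.refl _)
      rw [hfin]
      show k * (k.factorial * stirling2 n k + j.factorial * stirling2 n j)
        = k.factorial * stirling2 (n+1) k
      have hs : stirling2 (n+1) (j+1) = (j+1) * stirling2 n (j+1) + stirling2 n j := rfl
      rw [hk, hs, Nat.factorial_succ]
      ring

lemma quot_card {X : Type*} [Finite X] (f : X → X) (hf : ∀ x, f (f x) = x)
    (hfix : ∀ x, f x ≠ x) (R : X → X → Prop)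
    (hR : ∀ a b, R a b ↔ (a = b ∨ a = f b)) :
    Nat.card X = 2 * Nat.card (Quot R) := by
  have hequiv : Equivalence R := by
    constructor
    · intro x; rw [hR]; exact Or.inl rfl
    · intro x y h
      rw [hR] at h ⊢
      rcases h with rfl | rfl
      · exact Or.inl rfl
      · right; rw [hf]
    · intro x y z hxy hyz
      rw [hR] at hxy hyz ⊢
      rcases hxy with rfl | rfl <;> rcases hyz with h | h
      · exact Or.inl h
      · exact Or.inr h
      · exact Or.inr (congrArg f h)
      · exact Or.inl (by rw [h, hf])
  have key : ∀ a b, Quot.mk R a = Quot.mk R b ↔ R a b := by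
    intro a b
    rw [Quot.eq]
    exact ⟨fun h => (Equivalence.eqvGen_iff hequiv).1 h, Relation.EqvGen.rel a b⟩
  have hmk : ∀ x, Quot.mk R (f x) = Quot.mk R x := fun x =>
    Quot.sound ((hR _ _).2 (Or.inr rfl))
  let g : Quot R × Bool → X := fun p => if p.2 then p.1.out else f p.1.out
  have hgq : ∀ p : Quot R × Bool, Quot.mk R (g p) = p.1 := by
    rintro ⟨q, b⟩
    cases b
    · show Quot.mk R (f q.out) = q
      rw [hmk, Quot.out_eq]
    · show Quot.mk R q.out = q
      exact Quot.out_eq q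
  have hg : Function.Bijective g := by
    constructor
    · rintro ⟨q, b⟩ ⟨q', b'⟩ h
      have hq : q = q' := by
        have h1 := hgq ⟨q, b⟩
        have h2 := hgq ⟨q', b'⟩
        simp only at h1 h2
        rw [← h1, ← h2, h]
      subst hq
      cases b <;> cases b' <;> simp only [g] at h
      · rfl
      · exact absurd h (hfix q.out)
      · exact absurd h.symm (hfix q.out)
      · rfl
    · intro x
      have : Quot.mk R (Quot.mk R x).out = Quot.mk R x := Quot.out_eq _
      rw [key] at this
      rw [hR] at this
      rcases this with h | h
      · exact ⟨⟨Quot.mk R x, true⟩, h⟩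
      · refine ⟨⟨Quot.mk R x, false⟩, ?_⟩
        show f (Quot.mk R x).out = x
        rw [h, hf]
  have := Nat.card_congr (Equiv.ofBijective g hg)
  rw [Nat.card_prod] at this
  simp only [Nat.card_eq_fintype_card, Fintype.card_bool] at this
  omega

lemma surj_distinguishing (n k : ℕ) (hn : 2 ≤ n) (hk : (n + 1) / 2 + 1 ≤ k)
    (c : Fin n → Fin k) (hc : Function.Surjective c) : IsDistinguishing (pathGraph n) c := by
  intro α hα
  rcases aut_char n hn α with h | h
  · exact h
  · exfalso
    have hrev : ∀ v, c (Fin.rev v) = c v := fun v => by rw [← h v]; exact hα v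
    set m := (n + 1) / 2 with hm
    have hsub : (Finset.univ : Finset (Fin k)) ⊆
        (Finset.univ.filter (fun i : Fin n => i.val < m)).image c := by
      intro x _
      obtain ⟨i, rfl⟩ := hc x
      by_cases hi : i.val < m
      · exact Finset.mem_image.2 ⟨i, Finset.mem_filter.2 ⟨Finset.mem_univ _, hi⟩, rfl⟩
      · refine Finset.mem_image.2 ⟨Fin.rev i, Finset.mem_filter.2 ⟨Finset.mem_univ _, ?_⟩, hrev i⟩
        have := i.isLt
        rw [Fin.val_rev]
        omega
    have h1 : k ≤ ((Finset.univ.filter (fun i : Fin n => i.val < m)).image c).card := by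
      calc k = (Finset.univ : Finset (Fin k)).card := by simp
        _ ≤ _ := Finset.card_le_card hsub
    have h2 : ((Finset.univ.filter (fun i : Fin n => i.val < m)).image c).card ≤ m := by
      refine le_trans Finset.card_image_le ?_
      have : (Finset.univ.filter (fun i : Fin n => i.val < m)).card ≤ (Finset.range m).card :=
        Finset.card_le_card_of_injOn (fun i => i.val)
          (fun i hi => Finset.mem_range.2 (Finset.mem_filter.1 hi).2)
          (fun a _ b _ hab => Fin.ext hab)
      simpa using this
    omega

theorem phi_pathGraph_of_ge (n k : ℕ) (hn : 2 ≤ n) (hk : (n + 1) / 2 + 1 ≤ k) :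
    phi (pathGraph n) k = k.factorial * stirling2 n k / 2 := by
  classical
  have hsurj : ∀ x : {c : Fin n → Fin k // IsDistinguishing (pathGraph n) c ∧
      Function.Surjective c}, Function.Surjective (fun v => x.1 (Fin.rev v)) :=
    fun x => x.2.2.comp Fin.revPerm.surjective
  let f : {c : Fin n → Fin k // IsDistinguishing (pathGraph n) c ∧ Function.Surjective c} →
      {c : Fin n → Fin k // IsDistinguishing (pathGraph n) c ∧ Function.Surjective c} :=
    fun x => ⟨fun v => x.1 (Fin.rev v),
      surj_distinguishing n k hn hk _ (hsurj x), hsurj x⟩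
  have hf : ∀ x, f (f x) = x := fun x => Subtype.ext (funext fun v => by
    show x.1 (Fin.rev (Fin.rev v)) = x.1 v
    rw [Fin.rev_rev])
  have hfix : ∀ x, f x ≠ x := by
    intro x h
    have h' : ∀ v, x.1 (Fin.rev v) = x.1 v := fun v => congrFun (congrArg Subtype.val h) v
    have hid := x.2.1 (revIso n) (fun v => by rw [revIso_apply]; exact h' v)
    have h0 := hid ⟨0, by omega⟩
    rw [revIso_apply] at h0
    have hv := congrArg Fin.val h0
    rw [Fin.val_rev] at hv
    simp only [Fin.val_mk] at hv
    omega
  set R : {c : Fin n → Fin k // IsDistinguishing (pathGraph n) c ∧ Function.Surjective c} →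
      {c : Fin n → Fin k // IsDistinguishing (pathGraph n) c ∧ Function.Surjective c} → Prop :=
    fun c₁ c₂ => ∃ α : pathGraph n ≃g pathGraph n, ∀ v, c₁.1 v = c₂.1 (α v) with hRdef
  have hR : ∀ a b, R a b ↔ (a = b ∨ a = f b) := by
    intro a b
    constructor
    · rintro ⟨α, hα⟩
      rcases aut_char n hn α with h | h
      · left; apply Subtype.ext; funext v; rw [hα v, h v]
      · right; apply Subtype.ext; funext v; rw [hα v, h v]
    · rintro (rfl | rfl)
      · exact ⟨RelIso.refl _, fun v => rfl⟩
      · exact ⟨revIso n, fun v => by rw [revIso_apply]⟩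
  have hq := quot_card f hf hfix R hR
  have hcard : Nat.card {c : Fin n → Fin k // IsDistinguishing (pathGraph n) c ∧
      Function.Surjective c} = k.factorial * stirling2 n k := by
    rw [Nat.card_congr (Equiv.subtypeEquivRight (fun c =>
      ⟨fun h => h.2, fun h => ⟨surj_distinguishing n k hn hk c h, h⟩⟩))]
    exact card_surj n k
  have hq' : k.factorial * stirling2 n k = 2 * phi (pathGraph n) k := by
    rw [← hcard]
    exact hq
  omega
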